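/- arXiv:2406.03073 — 2 statements merged into one kernel-verified Lean document; each statement's English description precedes it below -/
import Mathlib

section
/- There is an absolute constant C > 0 such that for every integer k ≥ 12 and every real number t with |t| ≤ k^{2/3}, one has |Γ(k − 1/2 + it)| / Γ(k) ≤ C·exp(−t²/(2k))·k^{−1/2}. -/
open Complex Real

open MeasureTheory Finset in
private lemma absGammaLe {z : ℂ} (hz : 0 < z.re) :
    ‖Complex.Gamma z‖ ≤ Real.Gamma z.re := by
  rw [Complex.Gamma_eq_integral hz, Real.Gamma_eq_integral hz, Complex.GammaIntegral]
  refine norm_integral_le_of_norm_le (Real.GammaIntegral_convergent hz) ?_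
  filter_upwards [ae_restrict_mem measurableSet_Ioi] with x hx
  rw [norm_mul, Complex.norm_real, Real.norm_eq_abs,
    Complex.norm_cpow_eq_rpow_re_of_pos hx, Complex.sub_re, Complex.one_re,
    _root_.abs_of_nonneg (Real.exp_pos _).le]

open Finset in
private lemma cGammaShift (z : ℂ) (hz : 0 < z.re) (N : ℕ) :
    Complex.Gamma (z + N) = (∏ n ∈ range N, (z + n)) * Complex.Gamma z := by
  induction N with
  | zero => simp
  | succ n ih =>
    have hre : 0 < (z + (n : ℂ)).re := by
      simp only [Complex.add_re, Complex.natCast_re]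
      positivity
    have hne : z + (n : ℂ) ≠ 0 := fun h => by simp [h] at hre
    have h1 : z + ((n + 1 : ℕ) : ℂ) = (z + n) + 1 := by push_cast; ring
    rw [h1, Complex.Gamma_add_one _ hne, ih, prod_range_succ]; ring

open Finset in
private lemma rGammaShift (x : ℝ) (hx : 0 < x) (N : ℕ) :
    Real.Gamma (x + N) = (∏ n ∈ range N, (x + n)) * Real.Gamma x := by
  induction N with
  | zero => simp
  | succ n ih =>
    have hne : x + (n : ℝ) ≠ 0 := by positivity
    have h1 : x + ((n + 1 : ℕ) : ℝ) = (x + n) + 1 := by push_cast; ring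
    rw [h1, Real.Gamma_add_one hne, ih, prod_range_succ]; ring

private lemma expLeOneAdd {u : ℝ} (hu : 0 ≤ u) : Real.exp (u - u ^ 2) ≤ 1 + u := by
  have h1v : (0 : ℝ) < 1 + u := by linarith
  have h2 : 1 - u / (1 + u) ≤ Real.exp (-(u / (1 + u))) := by
    have := Real.add_one_le_exp (-(u / (1 + u))); linarith
  have h3 : 1 - u / (1 + u) = 1 / (1 + u) := by field_simp; ring
  have h5 : 1 / (1 + u) ≤ Real.exp (-(u / (1 + u))) := h3 ▸ h2
  calc Real.exp (u - u ^ 2) ≤ Real.exp (u / (1 + u)) := by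
        apply Real.exp_le_exp.2
        rw [le_div_iff₀ h1v]; nlinarith
    _ = (Real.exp (-(u / (1 + u))))⁻¹ := by rw [← Real.exp_neg, neg_neg]
    _ ≤ (1 / (1 + u))⁻¹ := inv_anti₀ (by positivity) h5
    _ = 1 + u := by field_simp

private lemma perTerm {a t : ℝ} (ha : 0 < a) :
    a ≤ Real.sqrt (a ^ 2 + t ^ 2) *
      Real.exp (((t ^ 2 / a ^ 2) ^ 2 - t ^ 2 / a ^ 2) / 2) := by
  set u : ℝ := t ^ 2 / a ^ 2 with hu
  clear_value u
  have hu0 : 0 ≤ u := hu ▸ by positivity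
  have key : a ^ 2 ≤ (a ^ 2 + t ^ 2) * Real.exp (u ^ 2 - u) := by
    have h1 : Real.exp (u - u ^ 2) ≤ 1 + u := expLeOneAdd hu0
    have h2 : a ^ 2 * (1 + u) = a ^ 2 + t ^ 2 := by
      rw [hu]; field_simp
    have h3 : a ^ 2 * Real.exp (u - u ^ 2) ≤ a ^ 2 + t ^ 2 := by
      rw [← h2]; exact mul_le_mul_of_nonneg_left h1 (by positivity)
    have h4 : Real.exp (u - u ^ 2) * Real.exp (u ^ 2 - u) = 1 := by
      rw [← Real.exp_add]; simp
    nlinarith [Real.exp_pos (u ^ 2 - u), Real.exp_pos (u - u ^ 2)]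
  calc a = Real.sqrt (a ^ 2) := (Real.sqrt_sq ha.le).symm
    _ ≤ Real.sqrt ((a ^ 2 + t ^ 2) * Real.exp (u ^ 2 - u)) := Real.sqrt_le_sqrt key
    _ = Real.sqrt (a ^ 2 + t ^ 2) * Real.exp ((u ^ 2 - u) / 2) := by
        rw [Real.sqrt_mul (by positivity), ← Real.exp_half]

private lemma invSubInv {a : ℝ} (ha : 0 < a) : a⁻¹ - (a + 1)⁻¹ = (a * (a + 1))⁻¹ := by
  have h1 : (0 : ℝ) < a + 1 := by linarith
  field_simp
  ring

set_option maxHeartbeats 1000000 in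
open Finset in
/-- The core estimate: `|Γ(x+it)| ≤ Γ(x) exp(1 − t²/(2K))` for `x = K − 1/2`. -/
private lemma core {K : ℝ} (hK : 12 ≤ K) {N : ℕ} (hN : K ^ 2 ≤ N) {t : ℝ}
    (ht : |t| ≤ K ^ ((2 : ℝ) / 3)) :
    ‖Complex.Gamma (((K - 1/2 : ℝ) : ℂ) + t * Complex.I)‖ ≤
      Real.Gamma (K - 1/2) * Real.exp (1 - t ^ 2 / (2 * K)) := by
  set x : ℝ := K - 1/2 with hxdef
  clear_value x
  have hK0 : (0 : ℝ) < K := by linarith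
  have hx : (23 : ℝ)/2 ≤ x := by rw [hxdef]; linarith
  have hx0 : (0 : ℝ) < x := by linarith
  have hx1 : (0 : ℝ) < x - 1 := by linarith
  set z : ℂ := ((x : ℝ) : ℂ) + t * Complex.I with hzdef
  have hzre : z.re = x := by rw [hzdef]; simp
  have hzim : z.im = t := by rw [hzdef]; simp
  clear_value z
  -- numeric facts
  have ht2 : t ^ 2 ≤ K ^ ((4 : ℝ) / 3) := by
    have h1 : t ^ 2 = |t| ^ 2 := (_root_.sq_abs t).symm
    have h2 : |t| ^ 2 ≤ (K ^ ((2 : ℝ) / 3)) ^ 2 :=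
      pow_le_pow_left₀ (abs_nonneg t) ht 2
    have h3 : (K ^ ((2 : ℝ) / 3)) ^ 2 = K ^ ((4 : ℝ) / 3) := by
      rw [← Real.rpow_natCast (K ^ ((2:ℝ)/3)) 2, ← Real.rpow_mul hK0.le]
      norm_num
    rw [h1, ← h3]; exact h2
  have hK1 : (1 : ℝ) ≤ K := by linarith
  have ht2' : t ^ 2 ≤ K ^ 2 := by
    calc t ^ 2 ≤ K ^ ((4:ℝ)/3) := ht2
      _ ≤ K ^ (2:ℝ) := Real.rpow_le_rpow_of_exponent_le hK1 (by norm_num)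
      _ = K ^ 2 := by rw [← Real.rpow_natCast K 2]; norm_num
  have ht4 : t ^ 4 ≤ K ^ ((8 : ℝ) / 3) := by
    have h1 : t ^ 4 = (t ^ 2) ^ 2 := by ring
    have h2 : (t ^ 2) ^ 2 ≤ (K ^ ((4 : ℝ) / 3)) ^ 2 :=
      pow_le_pow_left₀ (by positivity) ht2 2
    have h3 : (K ^ ((4 : ℝ) / 3)) ^ 2 = K ^ ((8 : ℝ) / 3) := by
      rw [← Real.rpow_natCast (K ^ ((4:ℝ)/3)) 2, ← Real.rpow_mul hK0.le]
      norm_num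
    rw [h1, ← h3]; exact h2
  have hK13 : (2 : ℝ) ≤ K ^ ((1 : ℝ) / 3) := by
    have h8 : (8 : ℝ) ^ ((1 : ℝ) / 3) = 2 := by
      rw [show (8 : ℝ) = 2 ^ (3 : ℝ) by
            rw [show (3:ℝ) = ((3:ℕ):ℝ) by norm_num, Real.rpow_natCast]; norm_num,
        ← Real.rpow_mul (by norm_num)]
      norm_num
    calc (2 : ℝ) = (8 : ℝ) ^ ((1 : ℝ) / 3) := h8.symm
      _ ≤ K ^ ((1 : ℝ) / 3) :=
        Real.rpow_le_rpow (by norm_num) (by linarith) (by norm_num)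
  have hK83 : K ^ ((8 : ℝ) / 3) ≤ K ^ 3 / 2 := by
    have h1 : K ^ ((8 : ℝ) / 3) * K ^ ((1 : ℝ) / 3) = K ^ 3 := by
      rw [← Real.rpow_add hK0, show (8:ℝ)/3 + 1/3 = 3 by norm_num,
        ← Real.rpow_natCast K 3]
      norm_num
    have h2 : 0 < K ^ ((8 : ℝ) / 3) := Real.rpow_pos_of_pos hK0 _
    nlinarith
  have ht4' : t ^ 4 ≤ x ^ 2 * (x - 1) := by
    have h1 : K ^ 3 / 2 ≤ x ^ 2 * (x - 1) := by
      rw [hxdef]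
      nlinarith [mul_nonneg (sq_nonneg K) (show (0:ℝ) ≤ K - 5 by linarith)]
    linarith
  -- the Gamma shift comparison
  have hxn : ∀ n : ℕ, (0:ℝ) < x + n := fun n => by positivity
  have habs : ∀ n : ℕ, ‖z + n‖ = Real.sqrt ((x + n) ^ 2 + t ^ 2) := by
    intro n
    rw [Complex.norm_def, Complex.normSq_apply]
    simp only [Complex.add_re, Complex.add_im, Complex.natCast_re, Complex.natCast_im, hzre,
      hzim, add_zero]
    congr 1
    ring
  have hprodpos : 0 < ∏ n ∈ range N, ‖z + n‖ := by
    apply prod_pos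
    intro n _
    rw [habs n]
    exact Real.sqrt_pos.2 (by positivity)
  have hshift : ‖Complex.Gamma z‖ * ∏ n ∈ range N, ‖z + n‖
      = ‖Complex.Gamma (z + N)‖ := by
    rw [cGammaShift z (by rw [hzre]; exact hx0) N, norm_mul, Complex.norm_prod]; ring
  have hle1 : ‖Complex.Gamma (z + N)‖ ≤ Real.Gamma (x + N) := by
    have hre : (z + (N : ℂ)).re = x + N := by
      simp [Complex.add_re, hzre]
    calc ‖Complex.Gamma (z + N)‖ ≤ Real.Gamma ((z + (N:ℂ)).re) :=
          absGammaLe (by rw [hre]; positivity)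
      _ = Real.Gamma (x + N) := by rw [hre]
  -- per-term product bound
  set c : ℕ → ℝ := fun n => ((t ^ 2 / (x + n) ^ 2) ^ 2 - t ^ 2 / (x + n) ^ 2) / 2 with hc
  clear_value c
  have hprodle : (∏ n ∈ range N, (x + (n:ℝ))) ≤
      (∏ n ∈ range N, ‖z + n‖) * Real.exp (∑ n ∈ range N, c n) := by
    rw [Real.exp_sum, ← prod_mul_distrib]
    apply prod_le_prod
    · intro n _; exact (hxn n).le
    · intro n _
      rw [habs n, hc]
      exact perTerm (hxn n)
  -- sum bounds
  set S : ℝ := ∑ n ∈ range N, ((x + (n:ℝ)) ^ 2)⁻¹ with hS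
  clear_value S
  have hSlow : x⁻¹ - (x + N)⁻¹ ≤ S := by
    rw [hS]
    have htel := Finset.sum_range_sub' (fun n : ℕ => (x + (n:ℝ))⁻¹) N
    simp only [Nat.cast_zero, add_zero] at htel
    rw [← htel]
    apply sum_le_sum
    intro n _
    have h0 := hxn n
    have e1 : x + ((n + 1 : ℕ):ℝ) = (x + n) + 1 := by push_cast; ring
    rw [e1, invSubInv h0]
    apply inv_anti₀ (by positivity)
    nlinarith
  have hShigh : S ≤ (x - 1)⁻¹ := by
    rw [hS]
    have htel := Finset.sum_range_sub' (fun n : ℕ => (x - 1 + (n:ℝ))⁻¹) N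
    simp only [Nat.cast_zero, add_zero] at htel
    have hstep : ∀ n ∈ range N, ((x + (n:ℝ)) ^ 2)⁻¹ ≤
        ((x - 1 + (n:ℝ))⁻¹ - (x - 1 + ((n + 1 : ℕ):ℝ))⁻¹) := by
      intro n _
      have h0 : (0:ℝ) < x - 1 + n := by
        have : (0:ℝ) ≤ n := Nat.cast_nonneg n
        linarith
      have e1 : x - 1 + ((n + 1 : ℕ):ℝ) = (x - 1 + n) + 1 := by push_cast; ring
      rw [e1, invSubInv h0]
      apply inv_anti₀ (by positivity)
      nlinarith [hxn n]
    calc ∑ n ∈ range N, ((x + (n:ℝ)) ^ 2)⁻¹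
        ≤ ∑ n ∈ range N, ((x - 1 + (n:ℝ))⁻¹ - (x - 1 + ((n + 1 : ℕ):ℝ))⁻¹) :=
          sum_le_sum hstep
      _ = (x-1)⁻¹ - (x - 1 + (N:ℝ))⁻¹ := htel
      _ ≤ (x-1)⁻¹ := by
          have h0 : (0:ℝ) < x - 1 + N := by
            have : (0:ℝ) ≤ N := Nat.cast_nonneg N
            linarith
          have := inv_pos.2 h0
          linarith
  -- bound the exponent sum
  have hxN : (0:ℝ) < x + N := by positivity
  have hcsum : ∑ n ∈ range N, c n ≤ 1 - t ^ 2 / (2 * K) := by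
    have hterm : ∀ n ∈ range N, c n ≤
        (t ^ 4 / x ^ 2 * ((x + (n:ℝ))^2)⁻¹ - t ^ 2 * ((x + (n:ℝ))^2)⁻¹) / 2 := by
      intro n _
      simp only [hc]
      have h0 := hxn n
      have h1 : (t ^ 2 / (x + n) ^ 2) ^ 2 ≤ (t ^ 2 / x ^ 2) * (t ^ 2 / (x + n) ^ 2) := by
        have hle : t ^ 2 / (x + n) ^ 2 ≤ t ^ 2 / x ^ 2 := by
          apply div_le_div_of_nonneg_left (sq_nonneg t) (by positivity)
          nlinarith [Nat.cast_nonneg (α := ℝ) n]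
        have hu0 : (0:ℝ) ≤ t ^ 2 / (x + n) ^ 2 := by positivity
        nlinarith
      have h2 : (t ^ 2 / x ^ 2) * (t ^ 2 / (x + n) ^ 2) =
          t ^ 4 / x ^ 2 * ((x + (n:ℝ))^2)⁻¹ := by
        field_simp
      have h3 : t ^ 2 / (x + n) ^ 2 = t ^ 2 * ((x + (n:ℝ))^2)⁻¹ := by
        rw [div_eq_mul_inv]
      rw [h2] at h1
      rw [h3] at h1 ⊢
      linarith
    have hsum : ∑ n ∈ range N, c n ≤ (t ^ 4 / x ^ 2 * S - t ^ 2 * S) / 2 := by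
      calc ∑ n ∈ range N, c n
          ≤ ∑ n ∈ range N, ((t ^ 4 / x ^ 2 * ((x + (n:ℝ))^2)⁻¹
              - t ^ 2 * ((x + (n:ℝ))^2)⁻¹) / 2) := sum_le_sum hterm
        _ = (t ^ 4 / x ^ 2 * S - t ^ 2 * S) / 2 := by
            rw [hS, Finset.mul_sum, Finset.mul_sum, ← Finset.sum_sub_distrib,
              ← Finset.sum_div]
    have hA : t ^ 4 / x ^ 2 * S ≤ 1 := by
      have h1 : t ^ 4 / x ^ 2 * S ≤ t ^ 4 / x ^ 2 * (x-1)⁻¹ :=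
        mul_le_mul_of_nonneg_left hShigh (by positivity)
      have h2 : t ^ 4 / x ^ 2 * (x - 1)⁻¹ = t ^ 4 / (x ^ 2 * (x - 1)) := by
        rw [← div_eq_mul_inv, div_div]
      have h3 : t ^ 4 / (x ^ 2 * (x - 1)) ≤ 1 := by
        rw [div_le_one (mul_pos (by positivity) hx1)]
        exact ht4'
      rw [h2] at h1
      linarith
    have hB := mul_le_mul_of_nonneg_left hSlow (sq_nonneg t)
    rw [mul_sub] at hB
    have hC : t ^ 2 * (x + (N:ℝ))⁻¹ ≤ 1 := by
      rw [← div_eq_mul_inv, div_le_one hxN]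
      linarith
    have hD : t ^ 2 * K⁻¹ ≤ t ^ 2 * x⁻¹ := by
      apply mul_le_mul_of_nonneg_left _ (sq_nonneg t)
      apply inv_anti₀ hx0
      linarith
    have hE : t ^ 2 / (2 * K) = t ^ 2 * K⁻¹ / 2 := by ring
    rw [hE]
    linarith
  -- conclude
  have hGxpos : 0 < Real.Gamma x := Real.Gamma_pos_of_pos hx0
  have main : ‖Complex.Gamma z‖ * (∏ n ∈ range N, ‖z + n‖) ≤
      (Real.Gamma x * Real.exp (∑ n ∈ range N, c n)) *
        (∏ n ∈ range N, ‖z + n‖) := by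
    calc ‖Complex.Gamma z‖ * (∏ n ∈ range N, ‖z + n‖)
        = ‖Complex.Gamma (z + N)‖ := hshift
      _ ≤ Real.Gamma (x + N) := hle1
      _ = (∏ n ∈ range N, (x + (n:ℝ))) * Real.Gamma x := rGammaShift x hx0 N
      _ ≤ ((∏ n ∈ range N, ‖z + n‖) * Real.exp (∑ n ∈ range N, c n))
            * Real.Gamma x := mul_le_mul_of_nonneg_right hprodle hGxpos.le
      _ = (Real.Gamma x * Real.exp (∑ n ∈ range N, c n)) *
            (∏ n ∈ range N, ‖z + n‖) := by ring
  have hfin : ‖Complex.Gamma z‖ ≤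
      Real.Gamma x * Real.exp (∑ n ∈ range N, c n) :=
    le_of_mul_le_mul_right main hprodpos
  calc ‖Complex.Gamma z‖ ≤ Real.Gamma x * Real.exp (∑ n ∈ range N, c n) := hfin
    _ ≤ Real.Gamma x * Real.exp (1 - t ^ 2 / (2 * K)) :=
        mul_le_mul_of_nonneg_left (Real.exp_le_exp.2 hcsum) hGxpos.le

set_option maxHeartbeats 1000000 in
/-- For `|t| ≤ k^{2/3}`, one has `|Γ(k − 1/2 + it)| / Γ(k) ≤ C exp(−t²/(2k)) k^{−1/2}`. -/
theorem gamma_ratio_small_t :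
    ∃ C : ℝ, 0 < C ∧ ∀ (k : ℤ), 12 ≤ k → ∀ t : ℝ, |t| ≤ (k : ℝ) ^ ((2 : ℝ)/3) →
      ‖Complex.Gamma ((k : ℂ) - 1/2 + t * Complex.I)‖ / Real.Gamma (k : ℝ)
        ≤ C * Real.exp (-t^2 / (2 * (k : ℝ))) * (k : ℝ) ^ (-(1 : ℝ)/2) := by
  refine ⟨Real.exp 1 * Real.sqrt 2, by positivity, ?_⟩
  intro k hk t ht
  have hk0 : (0 : ℤ) ≤ k := by linarith
  have hK : (12 : ℝ) ≤ (k : ℝ) := by exact_mod_cast hk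
  have hK0 : (0 : ℝ) < (k : ℝ) := by linarith
  have hN : ((k : ℝ)) ^ 2 ≤ ((k.toNat ^ 2 : ℕ) : ℝ) := by
    have h1 : ((k.toNat : ℕ) : ℝ) = (k : ℝ) := by exact_mod_cast Int.toNat_of_nonneg hk0
    push_cast [h1]
    exact le_rfl
  have hcore := core hK hN ht
  have hzeq : (k : ℂ) - 1/2 + t * Complex.I =
      (((k : ℝ) - 1/2 : ℝ) : ℂ) + t * Complex.I := by
    push_cast
    ring
  rw [hzeq]
  -- Gamma ratio bound via log-convexity
  have hx0 : (0 : ℝ) < (k : ℝ) - 1/2 := by linarith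
  have hK1 : (0 : ℝ) < (k : ℝ) - 1 := by linarith
  have hG : Real.Gamma (k : ℝ) = ((k : ℝ) - 1) * Real.Gamma ((k : ℝ) - 1) := by
    have h := Real.Gamma_add_one (s := (k : ℝ) - 1) (by linarith)
    rw [show (k : ℝ) - 1 + 1 = (k : ℝ) by ring] at h
    exact h
  have hGK : 0 < Real.Gamma (k : ℝ) := Real.Gamma_pos_of_pos hK0
  have hGK1 : 0 < Real.Gamma ((k : ℝ) - 1) := Real.Gamma_pos_of_pos hK1
  have hGx : 0 < Real.Gamma ((k : ℝ) - 1/2) := Real.Gamma_pos_of_pos hx0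
  have hconv := Real.convexOn_log_Gamma.2 (Set.mem_Ioi.2 hK1) (Set.mem_Ioi.2 hK0)
      (le_of_lt one_half_pos) (le_of_lt one_half_pos) (by norm_num)
  simp only [Function.comp_apply, smul_eq_mul] at hconv
  rw [show (1/2 : ℝ) * ((k : ℝ) - 1) + (1/2 : ℝ) * (k : ℝ) = (k : ℝ) - 1/2 by ring] at hconv
  have hsq : Real.Gamma ((k : ℝ) - 1/2) ^ 2 ≤
      Real.Gamma ((k : ℝ) - 1) * Real.Gamma (k : ℝ) := by
    have h1 : Real.log (Real.Gamma ((k : ℝ) - 1/2) ^ 2) ≤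
        Real.log (Real.Gamma ((k : ℝ) - 1) * Real.Gamma (k : ℝ)) := by
      rw [Real.log_pow, Real.log_mul hGK1.ne' hGK.ne']
      push_cast
      linarith
    exact (Real.log_le_log_iff (by positivity) (by positivity)).1 h1
  -- (k:ℝ)^(-(1:ℝ)/2) squared is (k:ℝ)⁻¹
  have hpow : ((k : ℝ) ^ (-(1 : ℝ)/2)) ^ 2 = ((k : ℝ))⁻¹ := by
    rw [← Real.rpow_natCast ((k:ℝ) ^ (-(1:ℝ)/2)) 2, ← Real.rpow_mul hK0.le]
    norm_num
    exact Real.rpow_neg_one _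
  have hpowpos : (0 : ℝ) < (k : ℝ) ^ (-(1 : ℝ)/2) := Real.rpow_pos_of_pos hK0 _
  have hratio : Real.Gamma ((k : ℝ) - 1/2) ≤
      Real.sqrt 2 * (k : ℝ) ^ (-(1 : ℝ)/2) * Real.Gamma (k : ℝ) := by
    have h2K : Real.Gamma ((k : ℝ) - 1) * Real.Gamma (k : ℝ) ≤
        2 * ((k : ℝ))⁻¹ * Real.Gamma (k : ℝ) ^ 2 := by
      have h1 : Real.Gamma ((k : ℝ) - 1) ≤ 2 * ((k : ℝ))⁻¹ * Real.Gamma (k : ℝ) := by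
        rw [hG]
        have h2 : (1 : ℝ) ≤ 2 * ((k : ℝ))⁻¹ * ((k : ℝ) - 1) := by
          rw [show 2 * ((k : ℝ))⁻¹ * ((k : ℝ) - 1) = 2 * ((k : ℝ) - 1) / (k : ℝ) by ring,
            le_div_iff₀ hK0]
          linarith
        nlinarith
      calc Real.Gamma ((k : ℝ) - 1) * Real.Gamma (k : ℝ)
          ≤ (2 * ((k : ℝ))⁻¹ * Real.Gamma (k : ℝ)) * Real.Gamma (k : ℝ) :=
            mul_le_mul_of_nonneg_right h1 hGK.le
        _ = 2 * ((k : ℝ))⁻¹ * Real.Gamma (k : ℝ) ^ 2 := by ring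
    have hsq2 : Real.Gamma ((k : ℝ) - 1/2) ^ 2 ≤
        (Real.sqrt 2 * (k : ℝ) ^ (-(1 : ℝ)/2) * Real.Gamma (k : ℝ)) ^ 2 := by
      have hR : (Real.sqrt 2 * (k : ℝ) ^ (-(1 : ℝ)/2) * Real.Gamma (k : ℝ)) ^ 2 =
          2 * ((k : ℝ))⁻¹ * Real.Gamma (k : ℝ) ^ 2 := by
        rw [mul_pow, mul_pow, Real.sq_sqrt (by norm_num : (0:ℝ) ≤ 2), hpow]
      rw [hR]
      linarith
    have hbpos : (0:ℝ) ≤ Real.sqrt 2 * (k : ℝ) ^ (-(1 : ℝ)/2) * Real.Gamma (k : ℝ) := by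
      positivity
    calc Real.Gamma ((k : ℝ) - 1/2)
        = Real.sqrt (Real.Gamma ((k : ℝ) - 1/2) ^ 2) := (Real.sqrt_sq hGx.le).symm
      _ ≤ Real.sqrt ((Real.sqrt 2 * (k : ℝ) ^ (-(1 : ℝ)/2) * Real.Gamma (k : ℝ)) ^ 2) :=
          Real.sqrt_le_sqrt hsq2
      _ = Real.sqrt 2 * (k : ℝ) ^ (-(1 : ℝ)/2) * Real.Gamma (k : ℝ) := Real.sqrt_sq hbpos
  -- assemble
  rw [div_le_iff₀ hGK]
  have hEexp : Real.exp (1 - t ^ 2 / (2 * (k : ℝ))) =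
      Real.exp 1 * Real.exp (-t ^ 2 / (2 * (k : ℝ))) := by
    rw [← Real.exp_add]
    congr 1
    ring
  calc ‖Complex.Gamma ((((k : ℝ) - 1/2 : ℝ) : ℂ) + t * Complex.I)‖
      ≤ Real.Gamma ((k : ℝ) - 1/2) * Real.exp (1 - t ^ 2 / (2 * (k : ℝ))) := hcore
    _ ≤ (Real.sqrt 2 * (k : ℝ) ^ (-(1 : ℝ)/2) * Real.Gamma (k : ℝ)) *
          Real.exp (1 - t ^ 2 / (2 * (k : ℝ))) :=
        mul_le_mul_of_nonneg_right hratio (Real.exp_pos _).le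
    _ = Real.exp 1 * Real.sqrt 2 * Real.exp (-t ^ 2 / (2 * (k : ℝ))) *
          (k : ℝ) ^ (-(1 : ℝ)/2) * Real.Gamma (k : ℝ) := by
        rw [hEexp]; ring
end

section
/- Let x be a complex number and a : ℕ → ℂ a sequence satisfying a(0) = 1, a(1) = x, and a(n+2) = x·a(n+1) − a(n) for all n ≥ 0. Then for every natural number m, x^{2m+1} = ∑_{l=0}^{m} [(2m+1)!·(2l+2) / ((m−l)!·(m+l+2)!)] · a(2l+1). -/
open Finset

set_option maxHeartbeats 1000000

lemma fne' (n : ℕ) : (n.factorial : ℂ) ≠ 0 := by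
  exact_mod_cast Nat.cast_ne_zero.mpr n.factorial_ne_zero

lemma fs' (n : ℕ) : ((n+1).factorial : ℂ) = (n+1) * n.factorial := by
  push_cast [Nat.factorial_succ]; ring

lemma hecke_bridge (l k : ℕ) :
    (((2*(l+k)+1).factorial * (2*l+2) : ℂ) / (((l+k)-l).factorial * ((l+k)+l+2).factorial : ℂ))
      = ((2*(l+k)+1).choose ((l+k)-l) : ℂ) - ((2*(l+k)+1).choose ((l+k)+l+2) : ℂ) := by
  rw [show (l+k)-l = k by omega, show (l+k)+l+2 = 2*l+k+2 by ring, show 2*(l+k)+1 = 2*l+2*k+1 by ring,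
      div_eq_iff (mul_ne_zero (fne' k) (fne' (2*l+k+2)))]
  match k with
  | 0 =>
    rw [Nat.choose_eq_zero_of_lt (by omega : 2*l+2*0+1 < 2*l+0+2),
        Nat.choose_zero_right, show 2*l+0+2 = (2*l+2*0+1)+1 by ring, fs' (2*l+2*0+1)]
    push_cast [Nat.factorial_zero]
    ring
  | k+1 =>
    have H1 : (((2*l+2*(k+1)+1).choose (k+1) : ℕ) : ℂ) * ((k+1).factorial * (2*l+k+2).factorial)
        = (2*l+2*(k+1)+1).factorial := by
      have h := Nat.choose_mul_factorial_mul_factorial (show k+1 ≤ 2*l+2*(k+1)+1 by omega)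
      rw [show 2*l+2*(k+1)+1 - (k+1) = 2*l+k+2 from by omega] at h
      exact_mod_cast (mul_assoc _ _ _).symm.trans h
    have H2 : (((2*l+2*(k+1)+1).choose (2*l+(k+1)+2) : ℕ) : ℂ)
          * (((2*l+k+2)+1).factorial * k.factorial) = (2*l+2*(k+1)+1).factorial := by
      have h := Nat.choose_mul_factorial_mul_factorial (show 2*l+(k+1)+2 ≤ 2*l+2*(k+1)+1 by omega)
      rw [show 2*l+2*(k+1)+1 - (2*l+(k+1)+2) = k from by omega,
          show 2*l+(k+1)+2 = (2*l+k+2)+1 from by omega] at h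
      exact_mod_cast (mul_assoc _ _ _).symm.trans h
    rw [show 2*l+(k+1)+2 = (2*l+k+2)+1 from by omega, fs' (2*l+k+2), fs' k] at *
    push_cast at H1 H2 ⊢
    linear_combination ((k:ℂ)+1)*H2 - (2*(l:ℂ)+k+3)*H1

noncomputable def heckeCoef (m l : ℕ) : ℂ :=
  if l ≤ m then ((2*m+1).choose (m-l) : ℂ) - ((2*m+1).choose (m+l+2) : ℂ) else 0

lemma pasc2 (n r : ℕ) : ((n+2).choose (r+2) : ℕ) = n.choose r + 2*(n.choose (r+1)) + n.choose (r+2) := by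
  rw [show n+2 = (n+1)+1 from rfl, Nat.choose_succ_succ (n+1) (r+1),
      Nat.choose_succ_succ n r, Nat.choose_succ_succ n (r+1)]
  ring

lemma crec0 (m : ℕ) : heckeCoef (m+1) 0 = 2 * heckeCoef m 0 + heckeCoef m 1 := by
  match m with
  | 0 =>
    simp only [heckeCoef, if_pos (by omega : (0:ℕ) ≤ 1), if_pos (le_refl 0),
      if_neg (by omega : ¬ (1:ℕ) ≤ 0)]
    norm_num [Nat.choose]
  | m+1 =>
    simp only [heckeCoef, if_pos (by omega : (0:ℕ) ≤ m+1+1), if_pos (by omega : (0:ℕ) ≤ m+1),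
      if_pos (by omega : (1:ℕ) ≤ m+1)]
    rw [show m+1+1-0 = m+2 by omega, show 2*(m+1+1)+1 = (2*m+3)+2 by ring,
        show (m+1+1)+0+2 = (m+2)+2 by omega, show m+1-0 = m+1 by omega,
        show 2*(m+1)+1 = 2*m+3 by ring, show (m+1)+0+2 = m+3 by omega,
        show m+1-1 = m by omega, show (m+1)+1+2 = m+4 by omega]
    rw [pasc2 (2*m+3) m, pasc2 (2*m+3) (m+2)]
    push_cast
    ring

lemma crecS (m j : ℕ) :
    heckeCoef (m+1) (j+1) = heckeCoef m j + 2 * heckeCoef m (j+1) + heckeCoef m (j+2) := by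
  obtain h | h | h | h : j + 2 ≤ m ∨ m = j+1 ∨ m = j ∨ m < j := by omega
  · obtain ⟨k, rfl⟩ : ∃ k, m = j+2+k := ⟨m-(j+2), by omega⟩
    simp only [heckeCoef, if_pos (by omega : j+1 ≤ j+2+k+1), if_pos (by omega : j ≤ j+2+k),
      if_pos (by omega : j+1 ≤ j+2+k), if_pos (by omega : j+2 ≤ j+2+k)]
    rw [show j+2+k+1-(j+1) = k+2 by omega, show 2*(j+2+k+1)+1 = (2*j+2*k+5)+2 by ring,
        show (j+2+k+1)+(j+1)+2 = (2*j+k+4)+2 by ring,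
        show j+2+k-j = k+2 by omega, show 2*(j+2+k)+1 = 2*j+2*k+5 by ring,
        show (j+2+k)+j+2 = 2*j+k+4 by ring,
        show j+2+k-(j+1) = k+1 by omega, show (j+2+k)+(j+1)+2 = 2*j+k+5 by ring,
        show j+2+k-(j+2) = k by omega, show (j+2+k)+(j+2)+2 = 2*j+k+6 by ring]
    rw [pasc2 (2*j+2*k+5) k, pasc2 (2*j+2*k+5) (2*j+k+4)]
    push_cast [show 2*j+k+4+1 = 2*j+k+5 by omega, show 2*j+k+4+2 = 2*j+k+6 by omega]
    ring
  · subst h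
    simp only [heckeCoef, if_pos (by omega : j+1 ≤ j+1+1), if_pos (by omega : j ≤ j+1),
      if_pos (le_refl (j+1)), if_neg (by omega : ¬ j+2 ≤ j+1)]
    rw [show j+1+1-(j+1) = 1 by omega, show (j+1+1)+(j+1)+2 = 2*(j+1+1)+1 by ring,
        show j+1-j = 1 by omega, show (j+1)+j+2 = 2*(j+1)+1 by ring,
        show j+1-(j+1) = 0 by omega]
    rw [Nat.choose_self, Nat.choose_self, Nat.choose_one_right, Nat.choose_one_right,
        Nat.choose_zero_right, Nat.choose_eq_zero_of_lt (by omega : 2*(j+1)+1 < (j+1)+(j+1)+2)]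
    push_cast
    ring
  · subst h
    simp only [heckeCoef, if_pos (le_refl (m+1)), if_pos (le_refl m),
      if_neg (by omega : ¬ m+1 ≤ m), if_neg (by omega : ¬ m+2 ≤ m)]
    rw [show m+1-(m+1) = 0 by omega, show m-m = 0 by omega]
    rw [Nat.choose_zero_right, Nat.choose_zero_right,
        Nat.choose_eq_zero_of_lt (by omega : 2*(m+1)+1 < (m+1)+(m+1)+2),
        Nat.choose_eq_zero_of_lt (by omega : 2*m+1 < m+m+2)]
    push_cast
    ring
  · simp only [heckeCoef, if_neg (by omega : ¬ j+1 ≤ m+1), if_neg (by omega : ¬ j ≤ m),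
      if_neg (by omega : ¬ j+1 ≤ m), if_neg (by omega : ¬ j+2 ≤ m)]
    ring

noncomputable def heckeCC (m j : ℕ) : ℂ := if j = 0 then 0 else heckeCoef m (j-1)

noncomputable def heckeB (a : ℕ → ℂ) (j : ℕ) : ℂ := if j = 0 then 0 else a (2*(j-1)+1)

lemma heckeCC_zero (m : ℕ) : heckeCC m 0 = 0 := by simp [heckeCC]
lemma heckeCC_succ (m j : ℕ) : heckeCC m (j+1) = heckeCoef m j := by simp [heckeCC]
lemma heckeB_zero (a : ℕ → ℂ) : heckeB a 0 = 0 := by simp [heckeB]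
lemma heckeB_succ (a : ℕ → ℂ) (j : ℕ) : heckeB a (j+1) = a (2*j+1) := by simp [heckeB]
lemma heckeCoef_zero_of_gt (m l : ℕ) (h : m < l) : heckeCoef m l = 0 := by
  simp [heckeCoef, Nat.not_le.mpr h]

lemma hecke_aux (x : ℂ) (a : ℕ → ℂ) (h0 : a 0 = 1) (h1 : a 1 = x)
    (hrec : ∀ n : ℕ, a (n + 2) = x * a (n + 1) - a n) (m : ℕ) :
    x ^ (2 * m + 1) = ∑ j ∈ Finset.range (m + 2), heckeCC m j * heckeB a j := by
  induction m with
  | zero =>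
    rw [Finset.sum_range_succ, Finset.sum_range_succ, Finset.sum_range_zero,
        heckeCC_zero, heckeCC_succ, heckeB_succ]
    simp only [heckeCoef, if_pos (le_refl 0)]
    norm_num [Nat.choose, h1]
  | succ m ih =>
    have hx2 : ∀ j, heckeCC m j * (x^2 * heckeB a j)
        = heckeCC m j * (heckeB a (j+1) + 2 * heckeB a j + heckeB a (j-1)) := by
      intro j
      match j with
      | 0 => rw [heckeCC_zero]; ring
      | 1 =>
        rw [heckeB_succ, heckeB_succ, show (1:ℕ)-1 = 0 by omega, heckeB_zero]
        have r2 : a 2 = x * a 1 - a 0 := hrec 0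
        have r3 : a 3 = x * a 2 - a 1 := hrec 1
        rw [show 2*0+1 = 1 by omega, show 2*1+1 = 3 by omega, r3, r2, h0, h1]
        ring
      | (j+2) =>
        rw [heckeB_succ, heckeB_succ, show j+2-1 = j+1 by omega, heckeB_succ]
        have r1 : a (2*j+5) = x * a (2*j+4) - a (2*j+3) := by
          have := hrec (2*j+3)
          rw [show 2*j+3+2 = 2*j+5 by omega, show 2*j+3+1 = 2*j+4 by omega] at this
          exact this
        have r2 : a (2*j+4) = x * a (2*j+3) - a (2*j+2) := by
          have := hrec (2*j+2)
          rw [show 2*j+2+2 = 2*j+4 by omega, show 2*j+2+1 = 2*j+3 by omega] at this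
          exact this
        have r3 : a (2*j+3) = x * a (2*j+2) - a (2*j+1) := by
          have := hrec (2*j+1)
          rw [show 2*j+1+2 = 2*j+3 by omega, show 2*j+1+1 = 2*j+2 by omega] at this
          exact this
        rw [show 2*(j+1)+1 = 2*j+3 by omega, show 2*(j+2)+1 = 2*j+5 by omega, r1, r2, r3]
        ring
    have hC : ∀ j, heckeCC (m+1) j * heckeB a j
        = heckeCC m (j-1) * heckeB a j + 2 * heckeCC m j * heckeB a j
          + heckeCC m (j+1) * heckeB a j := by
      intro j
      match j with
      | 0 => rw [heckeB_zero]; ring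
      | 1 =>
        rw [heckeCC_succ, show (1:ℕ)-1 = 0 by omega, heckeCC_zero, heckeCC_succ,
            heckeCC_succ, crec0 m]
        ring
      | (j+2) =>
        rw [heckeCC_succ, show j+2-1 = j+1 by omega, heckeCC_succ, heckeCC_succ,
            heckeCC_succ, crecS m j]
        ring
    have lhs_eq : x ^ (2 * (m+1) + 1)
        = ∑ j ∈ Finset.range (m+2),
            heckeCC m j * (heckeB a (j+1) + 2 * heckeB a j + heckeB a (j-1)) := by
      have hx : x ^ (2 * (m+1) + 1) = x^2 * x ^ (2*m+1) := by ring
      rw [hx, ih, Finset.mul_sum]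
      exact Finset.sum_congr rfl fun j _ => by
        rw [show x^2 * (heckeCC m j * heckeB a j) = heckeCC m j * (x^2 * heckeB a j) by ring,
            hx2 j]
    rw [lhs_eq, Finset.sum_congr rfl fun j _ => hC j]
    have split : ∀ (n : ℕ) (f g h : ℕ → ℂ),
        ∑ j ∈ Finset.range n, (f j + g j + h j)
          = (∑ j ∈ Finset.range n, f j) + (∑ j ∈ Finset.range n, g j)
            + (∑ j ∈ Finset.range n, h j) := by
      intro n f g h
      rw [Finset.sum_add_distrib, Finset.sum_add_distrib]
    rw [show (fun j => heckeCC m j * (heckeB a (j+1) + 2 * heckeB a j + heckeB a (j-1)))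
          = fun j => (heckeCC m j * heckeB a (j+1) + 2 * heckeCC m j * heckeB a j
            + heckeCC m j * heckeB a (j-1)) from funext fun j => by ring]
    rw [split, split]
    congr 1
    · congr 1
      · -- ∑_{j<m+2} CC m j * B (j+1) = ∑_{j<m+3} CC m (j-1) * B j
        rw [Finset.sum_range_succ' (fun j => heckeCC m (j-1) * heckeB a j) (m+2)]
        simp only [Nat.add_sub_cancel, heckeB_zero, mul_zero, add_zero]
      · -- 2-sums
        rw [Finset.sum_range_succ (fun j => 2 * heckeCC m j * heckeB a j) (m+2),
            heckeCC_succ, heckeCoef_zero_of_gt m (m+1) (by omega)]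
        ring
    · -- third: ∑_{j<m+2} CC m j * B (j-1) = ∑_{j<m+3} CC m (j+1) * B j
      rw [Finset.sum_range_succ' (fun j => heckeCC m j * heckeB a (j-1)) (m+1),
          Finset.sum_range_succ (fun j => heckeCC m (j+1) * heckeB a j) (m+2),
          Finset.sum_range_succ (fun j => heckeCC m (j+1) * heckeB a j) (m+1)]
      simp only [Nat.add_sub_cancel, heckeCC_zero, heckeB_zero, zero_mul, mul_zero, add_zero]
      rw [heckeCC_succ, heckeCC_succ, heckeCoef_zero_of_gt m (m+1) (by omega),
          heckeCoef_zero_of_gt m (m+2) (by omega)]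
      ring

/-- Odd-power linearization of Hecke eigenvalues: if `a(n)` satisfies the Hecke
relations at a prime (`a(0) = 1`, `a(1) = x`, `a(n+2) = x a(n+1) − a(n)`), then
`x^{2m+1} = ∑_{l=0}^{m} (2m+1)!(2l+2)/((m−l)!(m+l+2)!) · a(2l+1)`. -/
theorem hecke_odd_power (x : ℂ) (a : ℕ → ℂ) (h0 : a 0 = 1) (h1 : a 1 = x)
    (hrec : ∀ n : ℕ, a (n + 2) = x * a (n + 1) - a n) (m : ℕ) :
    x ^ (2 * m + 1) = ∑ l ∈ Finset.range (m + 1),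
      (((2 * m + 1).factorial * (2 * l + 2) : ℂ) /
        ((m - l).factorial * (m + l + 2).factorial : ℂ)) * a (2 * l + 1) := by
  rw [hecke_aux x a h0 h1 hrec m,
      Finset.sum_range_succ' (fun j => heckeCC m j * heckeB a j) (m+1),
      heckeCC_zero, zero_mul, add_zero]
  refine Finset.sum_congr rfl fun l hl => ?_
  rw [heckeCC_succ, heckeB_succ]
  have hlm : l ≤ m := by
    have := Finset.mem_range.mp hl; omega
  have hb := hecke_bridge l (m - l)
  rw [show l + (m - l) = m from by omega] at hb
  rw [heckeCoef, if_pos hlm, ← hb]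
end
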